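/- For every k ∈ ℕ there is K ∈ ℕ (depending only on k) such that the following holds for every deterministic complete finite automaton with state set Q of size k over an alphabet Σ, with total transition function δ : Q × Σ → Q extended to words as δ* : Q × Σ* → Q: for all words w_1, …, w_K ∈ Σ* and all states q_1, …, q_K ∈ Q, there exist indices 1 ≤ s < t ≤ K such that, letting q := δ*(q_s, w_{s+1} w_{s+2} ⋯ w_{t-1}), we have δ*(q, w_s w_{s+1} ⋯ w_{t-1}) = q. -/

import Mathlib

namespace DocSpanners

/-- A span: a pair of endpoint positions `[i, j⟩`. -/
abbrev Span : Type := ℕ × ℕ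

/-- `s` is a span of document `d`. -/
def IsSpanOf {α : Type} (d : List α) (s : Span) : Prop :=
  s.1 ≤ s.2 ∧ s.2 ≤ d.length

/-- A (schemaless) mapping over variable type `V`: a partial assignment of spans. -/
abbrev Mapping (V : Type) : Type := V → Option Span

/-- `m` is a mapping of document `d`. -/
def MappingOf {α V : Type} (d : List α) (m : Mapping V) : Prop :=
  ∀ x s, m x = some s → IsSpanOf d s

/-- A spanner: maps documents to sets of mappings. -/
abbrev Spanner (α V : Type) : Type := List α → Set (Mapping V)

/-- Labels of a variable-set automaton: letters and variable markers. -/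
inductive Label (α V : Type) : Type where
  | letter (a : α)
  | vopen (x : V)
  | vclose (x : V)
deriving DecidableEq

/-- The sequence of letters of a ref-word. -/
def letters {α V : Type} (w : List (Label α V)) : List α :=
  w.filterMap fun l => match l with
    | Label.letter a => some a
    | _ => none

/-- A ref-word is valid if for each variable, either its markers do not appear, or
the opening and closing markers appear exactly once with the opening first. -/
def ValidRef {α V : Type} [DecidableEq α] [DecidableEq V] (w : List (Label α V)) : Prop :=
  ∀ x : V,
    (Label.vopen x ∉ w ∧ Label.vclose x ∉ w) ∨
    (w.count (Label.vopen x) = 1 ∧ w.count (Label.vclose x) = 1 ∧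
      w.idxOf (Label.vopen x) < w.idxOf (Label.vclose x))

/-- The mapping defined by a (valid) ref-word: each marked variable is sent to the
span delimited by the positions at which its markers are read. -/
def refMapping {α V : Type} [DecidableEq α] [DecidableEq V] (w : List (Label α V)) :
    Mapping V := fun x =>
  if Label.vopen x ∈ w then
    some ((letters (w.take (w.idxOf (Label.vopen x)))).length,
          (letters (w.take (w.idxOf (Label.vclose x)))).length)
  else none

/-- A variable-set automaton with state type `Q`. -/
structure VA (α V Q : Type) : Type where
  init : Q
  final : Set Q
  trans : Q → Label α V → Q → Prop

/-- Paths in a VA. -/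
inductive VA.Path {α V Q : Type} (A : VA α V Q) : Q → List (Label α V) → Q → Prop where
  | nil (q : Q) : VA.Path A q [] q
  | cons {q q' q'' : Q} {l : Label α V} {w : List (Label α V)} :
      A.trans q l q' → VA.Path A q' w q'' → VA.Path A q (l :: w) q''

/-- The VA accepts the ref-word `w` (an accepting run reads `w`). -/
def VA.AcceptsRef {α V Q : Type} (A : VA α V Q) (w : List (Label α V)) : Prop :=
  ∃ qf ∈ A.final, A.Path A.init w qf

/-- A VA is sequential if every accepting run is valid. -/
def VA.Sequential {α V Q : Type} [DecidableEq α] [DecidableEq V] (A : VA α V Q) : Prop :=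
  ∀ w, A.AcceptsRef w → ValidRef w

/-- The spanner defined by a (sequential) VA. -/
def VA.spanner {α V Q : Type} [DecidableEq α] [DecidableEq V] (A : VA α V Q) :
    Spanner α V := fun d =>
  {m | ∃ w, A.AcceptsRef w ∧ letters w = d ∧ refMapping w = m}

/-- A spanner is regular if it is defined by some sequential VA with finitely many states. -/
def IsRegular {α V : Type} [DecidableEq α] [DecidableEq V] (P : Spanner α V) : Prop :=
  ∃ (Q : Type) (_ : Fintype Q) (A : VA α V Q), A.Sequential ∧ A.spanner = P

/-- The skyline operator: keep only the mappings of `P d` that are maximal under `R d`. -/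
def skyline {α V : Type} (P : Spanner α V)
    (R : List α → Mapping V → Mapping V → Prop) : Spanner α V := fun d =>
  {m | m ∈ P d ∧ ∀ m' ∈ P d, m' ≠ m → ¬ R d m m'}

/-- The variable inclusion domination relation: `m2` extends `m1`. -/
def varIncRel {V : Type} (m1 m2 : Mapping V) : Prop :=
  ∀ x s, m1 x = some s → m2 x = some s

/-- Two mappings have the same domain. -/
def sameDom {V : Type} (m1 m2 : Mapping V) : Prop :=
  ∀ x, m1 x = none ↔ m2 x = none

/-- The span inclusion domination relation. -/
def spanIncRel {V : Type} (m1 m2 : Mapping V) : Prop :=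
  sameDom m1 m2 ∧
    ∀ x s1 s2, m1 x = some s1 → m2 x = some s2 → s2.1 ≤ s1.1 ∧ s1.2 ≤ s2.2

/-- The left-to-right domination relation: same start, `m2` no shorter. -/
def ltrRel {V : Type} (m1 m2 : Mapping V) : Prop :=
  sameDom m1 m2 ∧
    ∀ x s1 s2, m1 x = some s1 → m2 x = some s2 →
      s1.1 = s2.1 ∧ s1.2 - s1.1 ≤ s2.2 - s2.1

/-- The span length domination relation: `m2`'s spans are no shorter. -/
def spanLenRel {V : Type} (m1 m2 : Mapping V) : Prop :=
  sameDom m1 m2 ∧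
    ∀ x s1 s2, m1 x = some s1 → m2 x = some s2 → s1.2 - s1.1 ≤ s2.2 - s2.1


private lemma chain_lemma {C : Type} [Fintype C] [DecidableEq C] {m : ℕ} (hm : 2 ≤ m)
    (hcard : Fintype.card C ≤ m) (c : ℕ → ℕ → C) :
    ∀ (n : ℕ) (S : Finset ℕ), m ^ n ≤ S.card →
      ∃ l : List (ℕ × C), l.length = n ∧ (∀ p ∈ l, p.1 ∈ S) ∧
        l.Pairwise (fun p q => p.1 < q.1 ∧ c p.1 q.1 = p.2) := by
  intro n
  induction n with
  | zero => intro S _; exact ⟨[], rfl, by simp, List.Pairwise.nil⟩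
  | succ n ih =>
    intro S hS
    have hSne : S.Nonempty := Finset.card_pos.mp (lt_of_lt_of_le (by positivity) hS)
    set v := S.min' hSne with hv
    have hmaps : ∀ a ∈ S.erase v, c v a ∈ (Finset.univ : Finset C) := by simp
    have hlt : (Finset.univ : Finset C).card * (m ^ n - 1) < (S.erase v).card := by
      have h1 : (S.erase v).card = S.card - 1 := Finset.card_erase_of_mem (S.min'_mem hSne)
      have h2 : (Finset.univ : Finset C).card * (m ^ n - 1) ≤ m * (m ^ n - 1) :=
        Nat.mul_le_mul_right _ (by simpa using hcard)
      have hpow : 1 ≤ m ^ n := Nat.one_le_pow _ _ (by omega)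
      have h3 : m * (m ^ n - 1) + m = m * ((m ^ n - 1) + 1) := by ring
      rw [Nat.sub_add_cancel hpow] at h3
      have h4 : m * m ^ n = m ^ (n + 1) := (pow_succ' m n).symm
      omega
    obtain ⟨d, -, hd⟩ := Finset.exists_lt_card_fiber_of_mul_lt_card_of_maps_to hmaps hlt
    have hpow : 1 ≤ m ^ n := Nat.one_le_pow _ _ (by omega)
    obtain ⟨l, hlen, hmem, hpair⟩ := ih ((S.erase v).filter (fun a => c v a = d)) (by omega)
    refine ⟨(v, d) :: l, by simp [hlen], ?_, ?_⟩
    · rintro p hp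
      rcases List.mem_cons.mp hp with rfl | hp
      · exact S.min'_mem hSne
      · exact Finset.mem_of_mem_erase (Finset.mem_of_mem_filter _ (hmem p hp))
    · refine List.Pairwise.cons ?_ hpair
      intro p hp
      have h5 := hmem p hp
      simp only [Finset.mem_filter, Finset.mem_erase] at h5
      have : v ≤ p.1 := S.min'_le _ h5.1.2
      exact ⟨lt_of_le_of_ne this (Ne.symm h5.1.1), h5.2⟩

private lemma ramsey_triangle {C : Type} [Fintype C] {m : ℕ} (hm : 2 ≤ m)
    (hcard : Fintype.card C ≤ m) (c : ℕ → ℕ → C) :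
    ∃ s t u : ℕ, 1 ≤ s ∧ s < t ∧ t < u ∧ u ≤ m ^ (m + 2) ∧
      c s t = c t u ∧ c s u = c s t := by
  classical
  obtain ⟨l, hlen, hmem, hpair⟩ := chain_lemma hm hcard c (m + 2)
    (Finset.Icc 1 (m ^ (m + 2))) (by simp [Nat.card_Icc])
  have hpg := List.pairwise_iff_get.mp hpair
  obtain ⟨i, j, hij, heq⟩ := Fintype.exists_ne_map_eq_of_card_lt
    (fun i : Fin (m + 1) => (l.get ⟨i, by omega⟩).2)
    (by simpa using lt_of_le_of_lt hcard (Nat.lt_succ_self m))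
  wlog hlt : (i : ℕ) < (j : ℕ) generalizing i j
  · have hne : (i : ℕ) ≠ (j : ℕ) := fun h => hij (Fin.ext h)
    exact this j i hij.symm heq.symm (by omega)
  · have hj : (j : ℕ) < m + 1 := j.isLt
    set i' : Fin l.length := ⟨i, by omega⟩
    set j' : Fin l.length := ⟨j, by omega⟩
    set u' : Fin l.length := ⟨(j : ℕ) + 1, by omega⟩
    have h1 := hpg i' j' (by simpa [i', j'] using hlt)
    have h2 := hpg j' u' (by simp [j', u'])
    have h3 := hpg i' u' (by simp [i', u'] ; omega)
    refine ⟨(l.get i').1, (l.get j').1, (l.get u').1, ?_, h1.1, h2.1, ?_, ?_, ?_⟩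
    · have := hmem _ (l.get_mem i') -- membership
      exact (Finset.mem_Icc.mp this).1
    · have := hmem _ (l.get_mem u')
      exact (Finset.mem_Icc.mp this).2
    · rw [h1.2, h2.2]
      simpa [i', j'] using heq
    · rw [h3.2, h1.2]

/-- For every `k` there is `K` (depending only on `k`) such that for
every deterministic complete automaton with `k` states, all words `w_1, …, w_K` and all
states `q_1, …, q_K`, there are `1 ≤ s < t ≤ K` such that, letting
`q := δ*(q_s, w_{s+1} ⋯ w_{t-1})`, we have `δ*(q, w_s ⋯ w_{t-1}) = q`. -/
theorem dfa_ramsey_pumping :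
    ∀ k : ℕ, ∃ K : ℕ, ∀ (Q : Type) [Fintype Q], Fintype.card Q = k →
      ∀ (α : Type) [Fintype α] (δ : Q → α → Q) (w : ℕ → List α) (q : ℕ → Q),
        ∃ s t : ℕ, 1 ≤ s ∧ s < t ∧ t ≤ K ∧
          (((List.Ico s t).map w).flatten).foldl δ
              ((((List.Ico (s + 1) t).map w).flatten).foldl δ (q s)) =
            (((List.Ico (s + 1) t).map w).flatten).foldl δ (q s) := by
  intro k
  refine ⟨(k ^ k + 2) ^ (k ^ k + 2 + 2), ?_⟩
  intro Q _ hk α _ δ w q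
  classical
  set m := k ^ k + 2 with hm
  set F : ℕ → ℕ → Q → Q := fun s t x => (((List.Ico s t).map w).flatten).foldl δ x with hF
  have hcomp : ∀ s t u : ℕ, s ≤ t → t ≤ u → ∀ x, F s u x = F t u (F s t x) := by
    intro s t u hst htu x
    simp only [hF]
    rw [← List.Ico.append_consecutive hst htu, List.map_append, List.flatten_append,
      List.foldl_append]
  have hcardC : Fintype.card (Q → Q) ≤ m := by
    rw [Fintype.card_fun, hk]
    omega
  obtain ⟨s, t, u, hs, hst, htu, hu, h1, h2⟩ :=
    ramsey_triangle (m := m) (by omega) hcardC F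
  refine ⟨s, u, hs, by omega, hu, ?_⟩
  show F s u (F (s + 1) u (q s)) = F (s + 1) u (q s)
  have key : ∀ x, F t u (F t u x) = F t u x := by
    intro x
    have h3 := hcomp s t u hst.le htu.le x
    rw [h2, h1] at h3
    exact h3.symm
  have h4 : F (s + 1) u (q s) = F t u (F (s + 1) t (q s)) := hcomp (s + 1) t u hst htu.le _
  have h5 : F s u = F t u := h2.trans h1
  rw [h5, h4, key]


end DocSpanners
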